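/- Consider idealized Muon on $L(W)=\frac12\|Wx-y\|_2^2$ with $W_0=0$, nonzero $x \in \mathbb{R}^n$ and $y \in \mathbb{R}^m$, step sizes $\eta_t > 0$, $\eta_t \to 0$, $\sum_t \eta_t = \infty$, and updates $W_{t+1} = W_t - \eta_t\,\mathrm{ortho}(\nabla_W L(W_t))$ where $\mathrm{ortho}$ denotes the orthogonal polar factor (with $\mathrm{ortho}(0)=0$). Then $W_t \to W^* = yx^\top/\|x\|_2^2$. -/

import Mathlib

open Filter Matrix

noncomputable def l2 {n : ℕ} (v : Fin n → ℝ) : ℝ := Real.sqrt (∑ i, v i ^ 2)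
noncomputable def l1 {n : ℕ} (v : Fin n → ℝ) : ℝ := ∑ i, |v i|
noncomputable def linf {n : ℕ} (v : Fin n → ℝ) : ℝ := ⨆ i, |v i|
noncomputable def maxNorm {m n : ℕ} (W : Matrix (Fin m) (Fin n) ℝ) : ℝ := ⨆ i, ⨆ j, |W i j|
noncomputable def spec {m n : ℕ} (W : Matrix (Fin m) (Fin n) ℝ) : ℝ :=
  sSup {c | ∃ v : Fin n → ℝ, l2 v = 1 ∧ c = l2 (W.mulVec v)}
noncomputable def l0 {n : ℕ} (v : Fin n → ℝ) : ℕ := (Finset.univ.filter fun j => v j ≠ 0).card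

noncomputable def orthoR1 {m n : ℕ} (r : Fin m → ℝ) (x : Fin n → ℝ) :
    Matrix (Fin m) (Fin n) ℝ :=
  if r = 0 ∨ x = 0 then 0 else (l2 r * l2 x)⁻¹ • vecMulVec r x

/-- general convergence lemma for sign-descent type sequences -/
lemma conv_aux (ε b : ℕ → ℝ) (hε : ∀ t, 0 < ε t) (hε0 : Tendsto ε atTop (nhds 0))
    (hdiv : Tendsto (fun N => ∑ t ∈ Finset.range N, ε t) atTop atTop)
    (hb0 : ∀ t, 0 ≤ b t) (hstep : ∀ t, b (t + 1) ≤ |b t - ε t|) :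
    Tendsto b atTop (nhds 0) := by
  rw [Metric.tendsto_atTop]
  intro δ hδ
  -- find T with ε t < δ/2 for t ≥ T
  obtain ⟨T, hT⟩ := (Metric.tendsto_atTop.mp hε0) (δ / 2) (by linarith)
  have hTsmall : ∀ t ≥ T, ε t < δ / 2 := by
    intro t ht
    have := hT t ht
    rw [Real.dist_eq, sub_zero, abs_of_pos (hε t)] at this
    exact this
  -- Step A: some t₀ ≥ T with b t₀ < δ
  have hA : ∃ t₀ ≥ T, b t₀ < δ := by
    by_contra h
    push_neg at h
    have hbig : ∀ t ≥ T, δ ≤ b t := fun t ht => h t ht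
    have hdesc : ∀ k, b (T + k) ≤ b T - ∑ i ∈ Finset.range k, ε (T + i) := by
      intro k
      induction k with
      | zero => simp
      | succ k ih =>
        have h1 : δ ≤ b (T + k) := hbig _ (Nat.le_add_right _ _)
        have h2 : ε (T + k) < δ / 2 := hTsmall _ (Nat.le_add_right _ _)
        have h3 : b (T + (k + 1)) ≤ b (T + k) - ε (T + k) := by
          have := hstep (T + k)
          rw [abs_of_nonneg (by linarith)] at this
          simpa [Nat.add_assoc] using this
        rw [Finset.sum_range_succ]
        linarith
    -- tail sums diverge
    have htail : Tendsto (fun k => ∑ i ∈ Finset.range k, ε (T + i)) atTop atTop := by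
      have : ∀ k, ∑ i ∈ Finset.range k, ε (T + i)
          = (∑ t ∈ Finset.range (T + k), ε t) - ∑ t ∈ Finset.range T, ε t := by
        intro k
        rw [Finset.sum_range_add]
        ring
      simp only [this, sub_eq_add_neg]
      have hcomp : Tendsto (fun k => T + k) atTop atTop := by
        simpa [Nat.add_comm] using tendsto_add_atTop_nat T
      exact tendsto_atTop_add_const_right _ _ (hdiv.comp hcomp)
    obtain ⟨k, hk⟩ := (htail.eventually_ge_atTop (b T + 1)).exists
    have := hdesc k
    have := hb0 (T + k)
    linarith
  obtain ⟨t₀, ht₀T, ht₀⟩ := hA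
  refine ⟨t₀, fun t ht => ?_⟩
  rw [Real.dist_eq, sub_zero, abs_of_nonneg (hb0 t)]
  -- Step B: invariance
  have hinv : ∀ k, b (t₀ + k) < δ := by
    intro k
    induction k with
    | zero => simpa using ht₀
    | succ k ih =>
      have hsm : ε (t₀ + k) < δ / 2 := hTsmall _ (le_trans ht₀T (Nat.le_add_right _ _))
      have h1 := hstep (t₀ + k)
      have h2 : |b (t₀ + k) - ε (t₀ + k)| < δ := by
        rw [abs_lt]
        constructor
        · have := hb0 (t₀ + k); linarith
        · have := hε (t₀ + k); linarith
      calc b (t₀ + (k + 1)) = b (t₀ + k + 1) := by ring_nf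
        _ ≤ _ := h1
        _ < δ := h2
  have : t = t₀ + (t - t₀) := by omega
  rw [this]
  exact hinv _

lemma l2_pos {n : ℕ} {v : Fin n → ℝ} (hv : v ≠ 0) : 0 < l2 v := by
  rw [l2]
  apply Real.sqrt_pos.mpr
  have : ∃ i, v i ≠ 0 := by
    by_contra h
    push_neg at h
    exact hv (funext h)
  obtain ⟨i, hi⟩ := this
  have : 0 < v i ^ 2 := by positivity
  exact lt_of_lt_of_le this (Finset.single_le_sum (fun j _ => sq_nonneg (v j)) (Finset.mem_univ i))

lemma l2_smul {n : ℕ} (c : ℝ) (v : Fin n → ℝ) : l2 (c • v) = |c| * l2 v := by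
  simp only [l2, Pi.smul_apply, smul_eq_mul, mul_pow, ← Finset.mul_sum]
  rw [Real.sqrt_mul (sq_nonneg c), Real.sqrt_sq_eq_abs]

lemma l2_sq {n : ℕ} (v : Fin n → ℝ) : l2 v ^ 2 = ∑ i, v i ^ 2 := by
  rw [l2, Real.sq_sqrt (Finset.sum_nonneg fun i _ => sq_nonneg (v i))]

theorem stmt8 {m n : ℕ} (x : Fin n → ℝ) (hx : x ≠ 0) (y : Fin m → ℝ) (hy : y ≠ 0)
    (η : ℕ → ℝ) (hpos : ∀ t, 0 < η t)
    (hto0 : Tendsto η atTop (nhds 0))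
    (hdiv : Tendsto (fun N => ∑ t ∈ Finset.range N, η t) atTop atTop)
    (W : ℕ → Matrix (Fin m) (Fin n) ℝ) (hW0 : W 0 = 0)
    (hrec : ∀ t, W (t + 1) = W t - η t • orthoR1 ((W t).mulVec x - y) x) :
    Tendsto W atTop (nhds (((l2 x) ^ 2)⁻¹ • vecMulVec y x)) := by
  have hxpos := l2_pos hx
  have hypos := l2_pos hy
  have hx2 : (0:ℝ) < l2 x ^ 2 := by positivity
  set s : ℝ := l2 x / l2 y with hs
  have hspos : 0 < s := by positivity
  -- scalar recursion
  set α : ℕ → ℝ := fun t => Nat.rec (0:ℝ)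
    (fun t a => a - η t * s * Real.sign (a - 1)) t with hα
  have hα0 : α 0 = 0 := rfl
  have hαrec : ∀ t, α (t + 1) = α t - η t * s * Real.sign (α t - 1) := fun t => rfl
  -- key: W t = (α t / l2 x ^ 2) • vecMulVec y x
  have hform : ∀ t, W t = (α t / l2 x ^ 2) • vecMulVec y x := by
    intro t
    induction t with
    | zero => simp [hW0, hα0]
    | succ t ih =>
      have hmul : (vecMulVec y x).mulVec x = (l2 x ^ 2) • y := by
        funext i
        simp only [mulVec, dotProduct, vecMulVec_apply, Pi.smul_apply, smul_eq_mul, l2_sq,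
          Finset.sum_mul]
        exact Finset.sum_congr rfl fun j _ => by ring
      have hres : (W t).mulVec x - y = (α t - 1) • y := by
        rw [ih]
        rw [smul_mulVec, hmul, smul_smul]
        rw [div_mul_cancel₀ _ (ne_of_gt hx2), sub_smul, one_smul]
      rw [hrec t, hres, ih]
      by_cases hcase : α t = 1
      · have : (α t - 1 : ℝ) • y = 0 := by rw [hcase]; simp
        rw [orthoR1, if_pos (Or.inl this)]
        rw [hαrec, hcase]
        simp
      · have hne : (α t - 1 : ℝ) ≠ 0 := sub_ne_zero.mpr hcase
        have hry : (α t - 1 : ℝ) • y ≠ 0 := smul_ne_zero hne hy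
        rw [orthoR1, if_neg (by push_neg; exact ⟨hry, hx⟩)]
        have hvv : vecMulVec ((α t - 1) • y) x = (α t - 1) • vecMulVec y x := by
          funext i j
          simp [vecMulVec_apply, mul_assoc]
        rw [l2_smul, hvv, hαrec]
        rw [smul_smul, smul_smul, ← sub_smul]
        congr 1
        have habs : |α t - 1| ≠ 0 := abs_ne_zero.mpr hne
        have hsign : Real.sign (α t - 1) = (α t - 1) / |α t - 1| := by
          rcases lt_trichotomy (α t - 1) 0 with h | h | h
          · rw [Real.sign_of_neg h, abs_of_neg h, div_neg, div_self hne]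
          · exact absurd h hne
          · rw [Real.sign_of_pos h, abs_of_pos h, div_self hne]
        rw [hsign, hs]
        field_simp
  -- convergence of the scalar sequence
  have hb : Tendsto (fun t => |α t - 1|) atTop (nhds 0) := by
    apply conv_aux (fun t => η t * s)
    · exact fun t => mul_pos (hpos t) hspos
    · simpa using hto0.mul_const s
    · have : (fun N => ∑ t ∈ Finset.range N, η t * s)
          = fun N => (∑ t ∈ Finset.range N, η t) * s := by
        funext N; rw [Finset.sum_mul]
      rw [this]
      exact hdiv.atTop_mul_const hspos
    · exact fun t => abs_nonneg _
    · intro t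
      rw [hαrec]
      rcases lt_trichotomy (α t - 1) 0 with h | h | h
      · rw [Real.sign_of_neg h, abs_of_neg h]
        rw [show α t - η t * s * (-1) - 1 = -(-(α t - 1) - η t * s) by ring, abs_neg]
      · rw [show (α t : ℝ) = 1 by linarith]
        simp [abs_nonneg]
        positivity
      · rw [Real.sign_of_pos h, abs_of_pos h]
        rw [show α t - η t * s * 1 - 1 = α t - 1 - η t * s by ring]
  have hαlim : Tendsto α atTop (nhds 1) := by
    have h0 : Tendsto (fun t => α t - 1) atTop (nhds 0) :=
      tendsto_of_tendsto_of_tendsto_of_le_of_le (by simpa using hb.neg) hb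
        (fun t => neg_abs_le _) (fun t => le_abs_self _)
    have := h0.add_const 1
    simpa using this
  have hWeq : W = fun t => (α t / l2 x ^ 2) • vecMulVec y x := funext hform
  rw [hWeq]
  have := (hαlim.div_const (l2 x ^ 2)).smul_const (vecMulVec y x)
  simpa [one_div] using this
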